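/- arXiv:1704.00328 — 3 statements merged into one kernel-verified Lean document; each statement's English description precedes it below -/
import Mathlib

section
/- For λ = 6 and any r with 0 < r ≤ 0.338, the function v(x) = √(1+λ)·cos(√λ·x) is a nonnegative supersolution on (-r, r): it satisfies (1/2)v'' + (1/2)v³ + (1/2)v - v ≤ 0 on (-r, r), v ≥ 0 on [-r, r], and v(x) ≥ (√2/cosh(x))² = 2/cosh²(x) at x = ±r. -/
open Real

private lemma aux_nonneg {f f' : ℝ → ℝ} (hf : ∀ x, HasDerivAt f (f' x) x)
    (h0 : f 0 = 0) (hd : ∀ x, 0 ≤ x → 0 ≤ f' x) {x : ℝ} (hx : 0 ≤ x) : 0 ≤ f x := by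
  have hmono : MonotoneOn f (Set.Ici (0:ℝ)) := by
    apply monotoneOn_of_deriv_nonneg (convex_Ici 0)
      (fun y _ => ((hf y).differentiableAt).continuousAt.continuousWithinAt)
      (fun y hy => ((hf y).differentiableAt).differentiableWithinAt)
    intro y hy
    rw [interior_Ici] at hy
    rw [(hf y).deriv]
    exact hd y (le_of_lt hy)
  have := hmono (Set.self_mem_Ici) (Set.mem_Ici.2 hx) hx
  rwa [h0] at this

private lemma sin_ge_cubic {x : ℝ} (hx : 0 ≤ x) : x - x ^ 3 / 6 ≤ Real.sin x := by
  have := aux_nonneg (f := fun x => Real.sin x - (x - x ^ 3 / 6))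
    (f' := fun x => Real.cos x - (1 - x ^ 2 / 2)) (fun y => by
      have : HasDerivAt (fun x : ℝ => x - x ^ 3 / 6) (1 - 3 * y ^ 2 / 6) y := by
        simpa using ((hasDerivAt_id y).fun_sub (((hasDerivAt_pow 3 y)).div_const 6))
      have h := (Real.hasDerivAt_sin y).fun_sub this
      exact h.congr_deriv (by ring))
    (by simp) (fun y hy => by
      have := Real.one_sub_sq_div_two_le_cos (x := y); linarith) hx
  linarith [this]

private lemma cos_le_quartic {x : ℝ} (hx : 0 ≤ x) :
    Real.cos x ≤ 1 - x ^ 2 / 2 + x ^ 4 / 24 := by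
  have := aux_nonneg (f := fun x => (1 - x ^ 2 / 2 + x ^ 4 / 24) - Real.cos x)
    (f' := fun x => (Real.sin x - (x - x ^ 3 / 6))) (fun y => by
      have h1 : HasDerivAt (fun x : ℝ => 1 - x ^ 2 / 2 + x ^ 4 / 24)
          (-y + 4 * y ^ 3 / 24) y := by
        simpa using (((hasDerivAt_const y (1:ℝ)).fun_sub ((hasDerivAt_pow 2 y).div_const 2)).fun_add
          ((hasDerivAt_pow 4 y).div_const 24))
      have h := h1.fun_sub (Real.hasDerivAt_cos y)
      exact h.congr_deriv (by ring))
    (by norm_num) (fun y hy => by have := sin_ge_cubic hy; linarith) hx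
  linarith [this]

private lemma sin_le_quintic {x : ℝ} (hx : 0 ≤ x) :
    Real.sin x ≤ x - x ^ 3 / 6 + x ^ 5 / 120 := by
  have := aux_nonneg (f := fun x => (x - x ^ 3 / 6 + x ^ 5 / 120) - Real.sin x)
    (f' := fun x => (1 - x ^ 2 / 2 + x ^ 4 / 24) - Real.cos x) (fun y => by
      have h1 : HasDerivAt (fun x : ℝ => x - x ^ 3 / 6 + x ^ 5 / 120)
          ((1 - 3 * y ^ 2 / 6) + 5 * y ^ 4 / 120) y := by
        simpa using (((hasDerivAt_id y).fun_sub ((hasDerivAt_pow 3 y).div_const 6)).fun_add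
          ((hasDerivAt_pow 5 y).div_const 120))
      have h := h1.fun_sub (Real.hasDerivAt_sin y)
      exact h.congr_deriv (by ring))
    (by norm_num) (fun y hy => by have := cos_le_quartic hy; linarith) hx
  linarith [this]

private lemma cos_ge_sextic {x : ℝ} (hx : 0 ≤ x) :
    1 - x ^ 2 / 2 + x ^ 4 / 24 - x ^ 6 / 720 ≤ Real.cos x := by
  have := aux_nonneg (f := fun x => Real.cos x - (1 - x ^ 2 / 2 + x ^ 4 / 24 - x ^ 6 / 720))
    (f' := fun x => (x - x ^ 3 / 6 + x ^ 5 / 120) - Real.sin x) (fun y => by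
      have h1 : HasDerivAt (fun x : ℝ => 1 - x ^ 2 / 2 + x ^ 4 / 24 - x ^ 6 / 720)
          (-y + 4 * y ^ 3 / 24 - 6 * y ^ 5 / 720) y := by
        simpa using ((((hasDerivAt_const y (1:ℝ)).fun_sub ((hasDerivAt_pow 2 y).div_const 2)).fun_add
          ((hasDerivAt_pow 4 y).div_const 24)).fun_sub ((hasDerivAt_pow 6 y).div_const 720))
      have h := (Real.hasDerivAt_cos y).fun_sub h1
      exact h.congr_deriv (by ring))
    (by norm_num) (fun y hy => by have := sin_le_quintic hy; linarith) hx
  linarith [this]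

private lemma cosh_ge_quad {x : ℝ} (hx : 0 ≤ x) : 1 + x ^ 2 / 2 ≤ Real.cosh x := by
  have := aux_nonneg (f := fun x => Real.cosh x - (1 + x ^ 2 / 2))
    (f' := fun x => Real.sinh x - x) (fun y => by
      have h1 : HasDerivAt (fun x : ℝ => 1 + x ^ 2 / 2) (y) y := by
        simpa using ((hasDerivAt_const y (1:ℝ)).fun_add ((hasDerivAt_pow 2 y).div_const 2))
      have h := (Real.hasDerivAt_cosh y).fun_sub h1
      exact h.congr_deriv (by ring))
    (by norm_num) (fun y hy => by
      have := Real.self_le_sinh_iff.2 hy; linarith) hx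
  linarith [this]

private lemma sinh_ge_cubic {x : ℝ} (hx : 0 ≤ x) : x + x ^ 3 / 6 ≤ Real.sinh x := by
  have := aux_nonneg (f := fun x => Real.sinh x - (x + x ^ 3 / 6))
    (f' := fun x => Real.cosh x - (1 + x ^ 2 / 2)) (fun y => by
      have h1 : HasDerivAt (fun x : ℝ => x + x ^ 3 / 6) (1 + 3 * y ^ 2 / 6) y := by
        simpa using ((hasDerivAt_id y).fun_add ((hasDerivAt_pow 3 y).div_const 6))
      have h := (Real.hasDerivAt_sinh y).fun_sub h1
      exact h.congr_deriv (by ring))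
    (by norm_num) (fun y hy => by have := cosh_ge_quad hy; linarith) hx
  linarith [this]

private lemma cosh_ge_quartic {x : ℝ} (hx : 0 ≤ x) :
    1 + x ^ 2 / 2 + x ^ 4 / 24 ≤ Real.cosh x := by
  have := aux_nonneg (f := fun x => Real.cosh x - (1 + x ^ 2 / 2 + x ^ 4 / 24))
    (f' := fun x => Real.sinh x - (x + x ^ 3 / 6)) (fun y => by
      have h1 : HasDerivAt (fun x : ℝ => 1 + x ^ 2 / 2 + x ^ 4 / 24)
          (y + 4 * y ^ 3 / 24) y := by
        simpa using (((hasDerivAt_const y (1:ℝ)).fun_add ((hasDerivAt_pow 2 y).div_const 2)).fun_add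
          ((hasDerivAt_pow 4 y).div_const 24))
      have h := (Real.hasDerivAt_cosh y).fun_sub h1
      exact h.congr_deriv (by ring))
    (by norm_num) (fun y hy => by have := sinh_ge_cubic hy; linarith) hx
  linarith [this]

private lemma boundary_ineq {r : ℝ} (hr : 0 < r) (hr' : r ≤ 0.338) :
    2 / Real.cosh r ^ 2 ≤ Real.sqrt 7 * Real.cos (Real.sqrt 6 * r) := by
  have hs7 : (Real.sqrt 7) ^ 2 = 7 := Real.sq_sqrt (by norm_num)
  have hs7n : 0 ≤ Real.sqrt 7 := Real.sqrt_nonneg 7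
  have hs6 : (Real.sqrt 6) ^ 2 = 6 := Real.sq_sqrt (by norm_num)
  have hs6n : 0 ≤ Real.sqrt 6 := Real.sqrt_nonneg 6
  obtain ⟨u, hu⟩ : ∃ u : ℝ, r ^ 2 = u := ⟨r ^ 2, rfl⟩
  have hu0 : 0 < u := by rw [← hu]; positivity
  have hum : u ≤ 0.114244 := by rw [← hu]; nlinarith
  -- cos lower bound
  have ht : 0 ≤ Real.sqrt 6 * r := by positivity
  have hts : (Real.sqrt 6 * r) ^ 2 = 6 * u := by rw [mul_pow, hs6, hu]
  have hcos : 1 - 3 * u + (3/2) * u ^ 2 - (3/10) * u ^ 3 ≤ Real.cos (Real.sqrt 6 * r) := by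
    have := cos_ge_sextic ht
    have h4 : (Real.sqrt 6 * r) ^ 4 = 36 * u ^ 2 := by
      rw [show (Real.sqrt 6 * r) ^ 4 = ((Real.sqrt 6 * r) ^ 2) ^ 2 from by ring, hts]; ring
    have h6 : (Real.sqrt 6 * r) ^ 6 = 216 * u ^ 3 := by
      rw [show (Real.sqrt 6 * r) ^ 6 = ((Real.sqrt 6 * r) ^ 2) ^ 3 from by ring, hts]; ring
    rw [hts, h4, h6] at this
    linarith
  -- cosh lower bound
  have hcosh : 1 + u + u ^ 2 / 3 ≤ Real.cosh r ^ 2 := by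
    have h1 := cosh_ge_quartic hr.le
    have hA : (0:ℝ) ≤ 1 + r ^ 2 / 2 + r ^ 4 / 24 := by positivity
    have h2 := pow_le_pow_left₀ hA h1 2
    nlinarith [h2, hu, sq_nonneg (r ^ 3), sq_nonneg (r ^ 2)]
  have hcoshpos : (0:ℝ) < Real.cosh r ^ 2 := by positivity
  -- positivity of the polynomial lower bound for cos
  have hP : (0:ℝ) ≤ 1 - 3 * u + (3/2) * u ^ 2 - (3/10) * u ^ 3 := by nlinarith
  have hQ : (0:ℝ) ≤ 1 + u + u ^ 2 / 3 := by positivity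
  -- polynomial product bound
  have hPQ : (0.7561 : ℝ) ≤ (1 - 3 * u + (3/2) * u ^ 2 - (3/10) * u ^ 3) * (1 + u + u ^ 2 / 3) := by
    nlinarith [mul_nonneg hu0.le hu0.le, mul_nonneg (mul_nonneg hu0.le hu0.le) hu0.le,
      mul_nonneg (sub_nonneg.2 hum) hu0.le, mul_nonneg (sub_nonneg.2 hum) (mul_nonneg hu0.le hu0.le),
      mul_nonneg (mul_nonneg (sub_nonneg.2 hum) hu0.le) hu0.le,
      sq_nonneg (u - 0.114244), mul_nonneg (sub_nonneg.2 hum) (sq_nonneg (u - 0.114244))]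
  have hs7lb : (2:ℝ) ≤ Real.sqrt 7 * 0.7561 := by nlinarith
  have hcosnn : 0 ≤ Real.cos (Real.sqrt 6 * r) := le_trans hP hcos
  rw [div_le_iff₀ hcoshpos]
  calc (2:ℝ) ≤ Real.sqrt 7 * 0.7561 := hs7lb
    _ ≤ Real.sqrt 7 * ((1 - 3 * u + (3/2) * u ^ 2 - (3/10) * u ^ 3) * (1 + u + u ^ 2 / 3)) := by
        nlinarith
    _ ≤ Real.sqrt 7 * (Real.cos (Real.sqrt 6 * r) * Real.cosh r ^ 2) := by
        apply mul_le_mul_of_nonneg_left _ hs7n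
        apply mul_le_mul hcos hcosh hQ hcosnn
    _ = Real.sqrt 7 * Real.cos (Real.sqrt 6 * r) * Real.cosh r ^ 2 := by ring

theorem stmt3 (r : ℝ) (hr : 0 < r) (hr' : r ≤ 0.338) (v : ℝ → ℝ)
    (hv : ∀ x, v x = Real.sqrt 7 * Real.cos (Real.sqrt 6 * x)) :
    (∀ x ∈ Set.Ioo (-r) r,
      (1 / 2) * deriv (deriv v) x + (1 / 2) * v x ^ 3 + (1 / 2) * v x - v x ≤ 0) ∧
    (∀ x : ℝ, |x| ≤ r → 0 ≤ v x) ∧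
    2 / Real.cosh r ^ 2 ≤ v r ∧ 2 / Real.cosh (-r) ^ 2 ≤ v (-r) := by
  have hvf : v = fun x => Real.sqrt 7 * Real.cos (Real.sqrt 6 * x) := funext hv
  subst hvf
  have hs7 : (Real.sqrt 7) ^ 2 = 7 := Real.sq_sqrt (by norm_num)
  have hs7n : 0 ≤ Real.sqrt 7 := Real.sqrt_nonneg 7
  have hs6 : (Real.sqrt 6) ^ 2 = 6 := Real.sq_sqrt (by norm_num)
  have hs6n : 0 ≤ Real.sqrt 6 := Real.sqrt_nonneg 6
  have hs6ub : Real.sqrt 6 ≤ 2.4495 := by nlinarith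
  have hpi : (3.141592:ℝ) < Real.pi := Real.pi_gt_d6
  -- cos nonneg on the region
  have hcosnn : ∀ x : ℝ, |x| ≤ r → 0 ≤ Real.cos (Real.sqrt 6 * x) := by
    intro x hx
    apply Real.cos_nonneg_of_neg_pi_div_two_le_of_le
    · have h1 : -r ≤ x := (abs_le.1 hx).1
      nlinarith [mul_le_mul_of_nonneg_left h1 hs6n,
        mul_le_mul hs6ub hr' hr.le (by norm_num : (0:ℝ) ≤ 2.4495)]
    · have h1 : x ≤ r := (abs_le.1 hx).2
      nlinarith [mul_le_mul_of_nonneg_left h1 hs6n,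
        mul_le_mul hs6ub hr' hr.le (by norm_num : (0:ℝ) ≤ 2.4495)]
  -- derivatives
  have hd1 : ∀ x : ℝ, HasDerivAt (fun x => Real.sqrt 7 * Real.cos (Real.sqrt 6 * x))
      (Real.sqrt 7 * (-Real.sin (Real.sqrt 6 * x) * Real.sqrt 6)) x := by
    intro x
    have hin : HasDerivAt (fun x : ℝ => Real.sqrt 6 * x) (Real.sqrt 6) x := by
      simpa using (hasDerivAt_id x).const_mul (Real.sqrt 6)
    exact ((Real.hasDerivAt_cos (Real.sqrt 6 * x)).comp x hin).const_mul (Real.sqrt 7)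
  have hderiv1 : deriv (fun x => Real.sqrt 7 * Real.cos (Real.sqrt 6 * x))
      = fun x => Real.sqrt 7 * (-Real.sin (Real.sqrt 6 * x) * Real.sqrt 6) :=
    funext fun x => (hd1 x).deriv
  have hd2 : ∀ x : ℝ, HasDerivAt (fun x => Real.sqrt 7 * (-Real.sin (Real.sqrt 6 * x) * Real.sqrt 6))
      (Real.sqrt 7 * (-Real.cos (Real.sqrt 6 * x) * Real.sqrt 6 * Real.sqrt 6)) x := by
    intro x
    have hin : HasDerivAt (fun x : ℝ => Real.sqrt 6 * x) (Real.sqrt 6) x := by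
      simpa using (hasDerivAt_id x).const_mul (Real.sqrt 6)
    have hsin : HasDerivAt (fun x : ℝ => Real.sin (Real.sqrt 6 * x))
        (Real.cos (Real.sqrt 6 * x) * Real.sqrt 6) x :=
      (Real.hasDerivAt_sin (Real.sqrt 6 * x)).comp x hin
    have := ((hsin.fun_neg).mul_const (Real.sqrt 6)).const_mul (Real.sqrt 7)
    exact this.congr_deriv (by ring)
  have hderiv2 : ∀ x : ℝ, deriv (deriv (fun x => Real.sqrt 7 * Real.cos (Real.sqrt 6 * x))) x
      = Real.sqrt 7 * (-Real.cos (Real.sqrt 6 * x) * Real.sqrt 6 * Real.sqrt 6) := by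
    intro x
    rw [hderiv1]
    exact (hd2 x).deriv
  refine ⟨?_, ?_, ?_, ?_⟩
  · intro x hx
    obtain ⟨hx1, hx2⟩ := hx
    have hxr : |x| ≤ r := abs_le.2 ⟨hx1.le, hx2.le⟩
    have hc : 0 ≤ Real.cos (Real.sqrt 6 * x) := hcosnn x hxr
    have hc1 : Real.cos (Real.sqrt 6 * x) ≤ 1 := Real.cos_le_one _
    rw [hderiv2 x]
    set c := Real.cos (Real.sqrt 6 * x)
    have h66 : Real.sqrt 6 * Real.sqrt 6 = 6 := by nlinarith
    have hexp : Real.sqrt 7 * (-c * Real.sqrt 6 * Real.sqrt 6) = -6 * (Real.sqrt 7 * c) := by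
      rw [show Real.sqrt 7 * (-c * Real.sqrt 6 * Real.sqrt 6)
          = -(Real.sqrt 7 * c) * (Real.sqrt 6 * Real.sqrt 6) from by ring, h66]
      ring
    rw [hexp]
    simp only [hv]
    have hc2 : (0:ℝ) ≤ 1 - c ^ 2 := by nlinarith
    have hcube : (Real.sqrt 7 * c) ^ 3 = 7 * Real.sqrt 7 * c ^ 3 := by
      rw [mul_pow, pow_succ, hs7]
    rw [hcube]
    nlinarith [mul_nonneg (mul_nonneg hs7n hc) hc2]
  · intro x hx
    simp only [hv]
    exact mul_nonneg hs7n (hcosnn x hx)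
  · simp only [hv]; exact boundary_ineq hr hr'
  · simp only [hv]
    have := boundary_ineq hr hr'
    simpa [Real.cosh_neg, mul_neg, Real.cos_neg] using this
end

section
/- For β, r > 0 and the Green function G(x,y) = (-2/√(2β))·(sinh(√(2β)(x-y)⁺) - (sinh(√(2β)(r+x))/sinh(2√(2β)r))·sinh(√(2β)(r-y))), the logarithmic derivative identity ∂ₓG(x,y)/G(x,y) = √(2β)/tanh(√(2β)(x+r)) holds when -r < x < y < r, and ∂ₓG(x,y)/G(x,y) = √(2β)/tanh(√(2β)(x-r)) holds when -r < y < x < r (assuming G(x,y) ≠ 0). -/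
lemma stmt7_key (a b w : ℝ) :
    (Real.cosh (a-b) * Real.sinh (w+w) - Real.cosh (w+a) * Real.sinh (w-b)) * Real.sinh (a-w)
      = (Real.sinh (a-b) * Real.sinh (w+w) - Real.sinh (w+a) * Real.sinh (w-b)) * Real.cosh (a-w) := by
  simp only [Real.sinh_add, Real.sinh_sub, Real.cosh_add, Real.cosh_sub]
  ring

theorem stmt7 (β r : ℝ) (hβ : 0 < β) (hr : 0 < r)
    (G : ℝ → ℝ → ℝ)
    (hG : ∀ x y, G x y = (-2 / Real.sqrt (2 * β)) *
      (Real.sinh (Real.sqrt (2 * β) * max (x - y) 0) -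
        Real.sinh (Real.sqrt (2 * β) * (r + x)) / Real.sinh (2 * Real.sqrt (2 * β) * r) *
          Real.sinh (Real.sqrt (2 * β) * (r - y)))) :
    ∀ x y : ℝ, -r < x → x < r → -r < y → y < r → G x y ≠ 0 →
      (x < y → deriv (fun z => G z y) x / G x y
        = Real.sqrt (2 * β) / Real.tanh (Real.sqrt (2 * β) * (x + r))) ∧
      (y < x → deriv (fun z => G z y) x / G x y
        = Real.sqrt (2 * β) / Real.tanh (Real.sqrt (2 * β) * (x - r))) := by
  intro x y hx1 hx2 hy1 hy2 hG0
  set s := Real.sqrt (2 * β) with hs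
  have hspos : 0 < s := Real.sqrt_pos.2 (by linarith)
  have hsne : s ≠ 0 := ne_of_gt hspos
  have hS2 : 0 < Real.sinh (2 * s * r) := Real.sinh_pos_iff.2 (by positivity)
  have hS2ne : Real.sinh (2 * s * r) ≠ 0 := ne_of_gt hS2
  have hshy : 0 < Real.sinh (s * (r - y)) := Real.sinh_pos_iff.2 (by nlinarith)
  have hshyne : Real.sinh (s * (r - y)) ≠ 0 := ne_of_gt hshy
  constructor
  · -- case x < y
    intro hxy
    have hev : (fun z => G z y) =ᶠ[nhds x]
        (fun z => (-2 / s) * (0 -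
          Real.sinh (s * (r + z)) / Real.sinh (2 * s * r) * Real.sinh (s * (r - y)))) := by
      filter_upwards [Iio_mem_nhds hxy] with z hz
      rw [hG]
      have hm : max (z - y) 0 = 0 := max_eq_right (by simp only [Set.mem_Iio] at hz; linarith)
      rw [hm, mul_zero, Real.sinh_zero]
    have h1 : HasDerivAt (fun z => s * (r + z)) s x := by
      simpa using ((hasDerivAt_id x).const_add r).const_mul s
    have hd : HasDerivAt (fun z => (-2 / s) * (0 -
        Real.sinh (s * (r + z)) / Real.sinh (2 * s * r) * Real.sinh (s * (r - y))))
        ((-2 / s) * (0 -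
          (Real.cosh (s * (r + x)) * s) / Real.sinh (2 * s * r) * Real.sinh (s * (r - y)))) x := by
      have h0 := ((((h1.sinh.div_const (Real.sinh (2 * s * r))).mul_const
        (Real.sinh (s * (r - y)))).const_sub 0).const_mul (-2 / s))
      refine h0.congr_deriv ?_
      ring
    have hderiv : deriv (fun z => G z y) x = (-2 / s) * (0 -
        (Real.cosh (s * (r + x)) * s) / Real.sinh (2 * s * r) * Real.sinh (s * (r - y))) := by
      rw [hev.deriv_eq, hd.deriv]
    have hm0 : max (x - y) 0 = 0 := max_eq_right (by linarith)
    have hGx : G x y = (-2 / s) * (0 -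
        Real.sinh (s * (r + x)) / Real.sinh (2 * s * r) * Real.sinh (s * (r - y))) := by
      rw [hG, hm0, mul_zero, Real.sinh_zero]
    have hsinhxr : 0 < Real.sinh (s * (x + r)) := Real.sinh_pos_iff.2 (by nlinarith)
    have hcosh : Real.cosh (s * (x + r)) ≠ 0 := ne_of_gt (Real.cosh_pos _)
    have harg : s * (r + x) = s * (x + r) := by ring
    rw [hderiv, hGx, harg, Real.tanh_eq_sinh_div_cosh, div_div_eq_mul_div]
    have hDen : (-2 / s) * (0 -
        Real.sinh (s * (x + r)) / Real.sinh (2 * s * r) * Real.sinh (s * (r - y))) ≠ 0 := by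
      have : Real.sinh (s * (x + r)) / Real.sinh (2 * s * r) * Real.sinh (s * (r - y)) ≠ 0 := by
        positivity
      intro h
      rcases mul_eq_zero.1 h with h | h
      · exact (div_ne_zero (by norm_num) hsne) h
      · rw [zero_sub, neg_eq_zero] at h; exact this h
    rw [div_eq_div_iff hDen (ne_of_gt hsinhxr)]
    field_simp
    ring
  · -- case y < x
    intro hyx
    have hev : (fun z => G z y) =ᶠ[nhds x]
        (fun z => (-2 / s) * (Real.sinh (s * (z - y)) -
          Real.sinh (s * (r + z)) / Real.sinh (2 * s * r) * Real.sinh (s * (r - y)))) := by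
      filter_upwards [Ioi_mem_nhds hyx] with z hz
      rw [hG]
      have hm : max (z - y) 0 = z - y := max_eq_left (by simp only [Set.mem_Ioi] at hz; linarith)
      rw [hm]
    have h1 : HasDerivAt (fun z => s * (z - y)) s x := by
      simpa using ((hasDerivAt_id x).sub_const y).const_mul s
    have h2 : HasDerivAt (fun z => s * (r + z)) s x := by
      simpa using ((hasDerivAt_id x).const_add r).const_mul s
    have hd : HasDerivAt (fun z => (-2 / s) * (Real.sinh (s * (z - y)) -
        Real.sinh (s * (r + z)) / Real.sinh (2 * s * r) * Real.sinh (s * (r - y))))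
        ((-2 / s) * ((Real.cosh (s * (x - y)) * s) -
          (Real.cosh (s * (r + x)) * s) / Real.sinh (2 * s * r) * Real.sinh (s * (r - y)))) x := by
      exact ((h1.sinh.sub ((h2.sinh.div_const _).mul_const _)).const_mul _)
    have hderiv : deriv (fun z => G z y) x = (-2 / s) * ((Real.cosh (s * (x - y)) * s) -
        (Real.cosh (s * (r + x)) * s) / Real.sinh (2 * s * r) * Real.sinh (s * (r - y))) := by
      rw [hev.deriv_eq, hd.deriv]
    have hm0 : max (x - y) 0 = x - y := max_eq_left (by linarith)
    have hGx : G x y = (-2 / s) * (Real.sinh (s * (x - y)) -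
        Real.sinh (s * (r + x)) / Real.sinh (2 * s * r) * Real.sinh (s * (r - y))) := by
      rw [hG, hm0]
    have hsinhxr : Real.sinh (s * (x - r)) < 0 := Real.sinh_neg_iff.2 (by nlinarith)
    have hsinhxrne : Real.sinh (s * (x - r)) ≠ 0 := ne_of_lt hsinhxr
    have hcosh : Real.cosh (s * (x - r)) ≠ 0 := ne_of_gt (Real.cosh_pos _)
    have hD : Real.sinh (s * (x - y)) -
        Real.sinh (s * (r + x)) / Real.sinh (2 * s * r) * Real.sinh (s * (r - y)) ≠ 0 := by
      intro h
      apply hG0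
      rw [hGx, h, mul_zero]
    -- rewrite arguments in terms of a = s*x, b = s*y, w = s*r
    have e1 : s * (x - y) = s * x - s * y := by ring
    have e2 : s * (r + x) = s * r + s * x := by ring
    have e3 : s * (r - y) = s * r - s * y := by ring
    have e4 : 2 * s * r = s * r + s * r := by ring
    have e5 : s * (x - r) = s * x - s * r := by ring
    have hkey := stmt7_key (s * x) (s * y) (s * r)
    rw [hderiv, hGx, Real.tanh_eq_sinh_div_cosh, div_div_eq_mul_div]
    have hDen : (-2 / s) * (Real.sinh (s * (x - y)) -
        Real.sinh (s * (r + x)) / Real.sinh (2 * s * r) * Real.sinh (s * (r - y))) ≠ 0 := by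
      exact mul_ne_zero (div_ne_zero (by norm_num) hsne) hD
    rw [div_eq_div_iff hDen hsinhxrne]
    rw [e1, e2, e3, e4] at hDen; rw [e1, e2, e3, e4, e5]
    have hS2' : Real.sinh (s * r + s * r) ≠ 0 := by
      rw [show s * r + s * r = 2 * s * r by ring]; exact hS2ne
    field_simp
    rw [show s * r * (1 + 1) = s * r + s * r by ring, e1, e2, e3, e5]
    linear_combination (-1) * hkey
end

section
/- Let f(s) = ∑_{l∈L} p_l s^l be a probability generating function with p_0 > 0 and f not affine (some p_l > 0 for l ≥ 2). Then the map s ↦ f(s)/(s·f'(s)) is strictly decreasing on the interval where s > 0, f'(s) > 0, and s is within the radius of convergence. -/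
lemma aux_summable (p : ℕ → ℝ) (hp : ∀ l, 0 ≤ p l) {ρ : ℝ}
    (hρ : Summable fun l => p l * ρ ^ l) (k : ℕ) {r : ℝ} (hr0 : 0 ≤ r) (hrρ : r < ρ) :
    Summable fun l : ℕ => (l : ℝ) ^ k * (p l * r ^ l) := by
  have hρ0 : 0 < ρ := lt_of_le_of_lt hr0 hrρ
  set M := ∑' l, p l * ρ ^ l with hM
  have hM0 : 0 ≤ M := tsum_nonneg (fun l => mul_nonneg (hp l) (pow_nonneg hρ0.le l))
  have hMl : ∀ l, p l * ρ ^ l ≤ M :=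
    fun l => Summable.le_tsum hρ l (fun m _ => mul_nonneg (hp m) (pow_nonneg hρ0.le m))
  have hgeo : Summable fun l : ℕ => M * ((l : ℝ) ^ k * (r / ρ) ^ l) := by
    refine (summable_pow_mul_geometric_of_norm_lt_one k ?_).mul_left M
    rw [Real.norm_eq_abs, abs_of_nonneg (div_nonneg hr0 hρ0.le)]
    exact (div_lt_one hρ0).2 hrρ
  refine Summable.of_nonneg_of_le (fun l => mul_nonneg (pow_nonneg (Nat.cast_nonneg l) k) (mul_nonneg (hp l) (pow_nonneg hr0 l))) (fun l => ?_) hgeo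
  have hd0 : (0:ℝ) ≤ r / ρ := div_nonneg hr0 hρ0.le
  have he : (l : ℝ) ^ k * (p l * r ^ l) = (p l * ρ ^ l) * ((l : ℝ) ^ k * (r / ρ) ^ l) := by
    rw [div_pow]
    field_simp
  rw [he]
  exact mul_le_mul_of_nonneg_right (hMl l) (by positivity)

lemma aux_cs (p : ℕ → ℝ) (hp : ∀ l, 0 ≤ p l) (h0 : 0 < p 0) (k : ℕ) (hk : 0 < k) (hpk : 0 < p k)
    {x : ℝ} (hx : 0 < x) (S0 : Summable fun l : ℕ => p l * x ^ l)
    (S1 : Summable fun l : ℕ => (l : ℝ) * (p l * x ^ l))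
    (S2 : Summable fun l : ℕ => (l : ℝ) ^ 2 * (p l * x ^ l)) :
    (∑' l : ℕ, (l : ℝ) * (p l * x ^ l)) ^ 2
      < (∑' l : ℕ, p l * x ^ l) * (∑' l : ℕ, (l : ℝ) ^ 2 * (p l * x ^ l)) := by
  set a := ∑' l : ℕ, p l * x ^ l with hadef
  set b := ∑' l : ℕ, (l : ℝ) * (p l * x ^ l) with hbdef
  set c := ∑' l : ℕ, (l : ℝ) ^ 2 * (p l * x ^ l) with hcdef
  have hq : ∀ l : ℕ, 0 ≤ p l * x ^ l := fun l => mul_nonneg (hp l) (pow_nonneg hx.le l)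
  have ha : 0 < a := by
    have h1 : p 0 * x ^ 0 ≤ a := Summable.le_tsum S0 0 (fun m _ => hq m)
    have h2 : (0:ℝ) < p 0 * x ^ 0 := by simpa using h0
    linarith
  have hb : 0 < b := by
    have h1 : (k : ℝ) * (p k * x ^ k) ≤ b :=
      Summable.le_tsum S1 k (fun m _ => mul_nonneg (Nat.cast_nonneg m) (hq m))
    have h2 : (0:ℝ) < (k : ℝ) * (p k * x ^ k) := by
      have : (0:ℝ) < (k:ℝ) := by exact_mod_cast hk
      positivity
    linarith
  set t := b / a with ht
  have htpos : 0 < t := div_pos hb ha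
  have hEq : (fun l : ℕ => (p l * x ^ l) * ((l : ℝ) - t) ^ 2)
      = fun l : ℕ => ((l : ℝ) ^ 2 * (p l * x ^ l) - (2 * t) * ((l : ℝ) * (p l * x ^ l)))
        + t ^ 2 * (p l * x ^ l) := by
    funext l; ring
  have hS' : Summable fun l : ℕ => (p l * x ^ l) * ((l : ℝ) - t) ^ 2 := by
    rw [hEq]; exact (S2.sub (S1.mul_left (2 * t))).add (S0.mul_left (t ^ 2))
  have hsumval : ∑' l : ℕ, (p l * x ^ l) * ((l : ℝ) - t) ^ 2 = c - 2 * t * b + t ^ 2 * a := by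
    rw [hEq, Summable.tsum_add (S2.sub (S1.mul_left (2 * t))) (S0.mul_left (t ^ 2)),
      Summable.tsum_sub S2 (S1.mul_left (2 * t)), tsum_mul_left, tsum_mul_left]
  have hpos : 0 < c - 2 * t * b + t ^ 2 * a := by
    rw [← hsumval]
    have hterm : (p 0 * x ^ 0) * ((0 : ℝ) - t) ^ 2 ≤ ∑' l : ℕ, (p l * x ^ l) * ((l : ℝ) - t) ^ 2 := by
      have := Summable.le_tsum hS' 0 (fun m _ => mul_nonneg (hq m) (sq_nonneg _))
      simpa using this
    have hterm0 : (0:ℝ) < (p 0 * x ^ 0) * ((0 : ℝ) - t) ^ 2 := by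
      have : ((0:ℝ) - t) ^ 2 = t ^ 2 := by ring
      rw [this]
      have h2 : (0:ℝ) < p 0 * x ^ 0 := by simpa using h0
      positivity
    linarith
  have hkey : a * (c - 2 * t * b + t ^ 2 * a) = a * c - b ^ 2 := by
    rw [ht]; field_simp; ring
  nlinarith [mul_pos ha hpos]

set_option maxHeartbeats 1000000 in
theorem stmt10 (L : Set ℕ) (p : ℕ → ℝ) (hp : ∀ l, 0 ≤ p l)
    (hsupp : ∀ l ∉ L, p l = 0) (hsum : ∑' l, p l = 1) (h0 : 0 < p 0)
    (hbig : ∃ l, 2 ≤ l ∧ 0 < p l)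
    (f : ℝ → ℝ) (hf : ∀ s, f s = ∑' l, p l * s ^ l)
    (s₁ s₂ : ℝ) (h1 : 0 < s₁) (h12 : s₁ < s₂)
    (hrad : ∃ ρ, s₂ < ρ ∧ Summable (fun l => p l * ρ ^ l))
    (hd1 : 0 < deriv f s₁) (hd2 : 0 < deriv f s₂) :
    f s₂ / (s₂ * deriv f s₂) < f s₁ / (s₁ * deriv f s₁) := by
  obtain ⟨k, hk2, hpk⟩ := hbig
  obtain ⟨ρ, hs2ρ, hρ⟩ := hrad
  have h2 : 0 < s₂ := h1.trans h12
  set r : ℝ := (s₂ + ρ) / 2 with hrdef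
  have hs2r : s₂ < r := by rw [hrdef]; linarith
  have hrρ : r < ρ := by rw [hrdef]; linarith
  have hr0 : 0 < r := h2.trans hs2r
  have hkey : ∀ k' : ℕ, Summable fun l : ℕ => (l : ℝ) ^ k' * (p l * r ^ l) :=
    fun k' => aux_summable p hp hρ k' hr0.le hrρ
  have Sx : ∀ (k' : ℕ) {x : ℝ}, 0 ≤ x → x ≤ r →
      Summable fun l : ℕ => (l : ℝ) ^ k' * (p l * x ^ l) := by
    intro k' x hx0 hxr
    refine Summable.of_nonneg_of_le
      (fun l => mul_nonneg (pow_nonneg (Nat.cast_nonneg l) k')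
        (mul_nonneg (hp l) (pow_nonneg hx0 l))) (fun l => ?_) (hkey k')
    exact mul_le_mul_of_nonneg_left
      (mul_le_mul_of_nonneg_left (pow_le_pow_left₀ hx0 hxr l) (hp l))
      (pow_nonneg (Nat.cast_nonneg l) k')
  have S0 : ∀ {x : ℝ}, 0 ≤ x → x ≤ r → Summable fun l : ℕ => p l * x ^ l := by
    intro x hx0 hxr
    simpa using Sx 0 hx0 hxr
  have S1 : ∀ {x : ℝ}, 0 ≤ x → x ≤ r → Summable fun l : ℕ => (l : ℝ) * (p l * x ^ l) := by
    intro x hx0 hxr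
    simpa using Sx 1 hx0 hxr
  set U : Set ℝ := Set.Ioo (0 : ℝ) r with hUdef
  have hs1U : s₁ ∈ U := ⟨h1, h12.trans hs2r⟩
  have hs2U : s₂ ∈ U := ⟨h2, hs2r⟩
  set G1 : ℝ → ℝ := fun x => ∑' l : ℕ, p l * ((l : ℝ) * x ^ (l - 1)) with hG1def
  set G2 : ℝ → ℝ := fun x =>
    ∑' l : ℕ, p l * (l : ℝ) * ((l - 1 : ℕ) : ℝ) * x ^ (l - 1 - 1) with hG2def
  have hfe : f = fun x => ∑' l : ℕ, p l * x ^ l := funext hf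
  -- summability of derivative term series at s₁
  have hg0a : Summable fun l : ℕ => p l * ((l : ℝ) * s₁ ^ (l - 1)) := by
    refine ((S1 h1.le (h12.trans hs2r).le).div_const s₁).congr fun l => ?_
    match l with
    | 0 => simp
    | Nat.succ n =>
      rw [pow_succ]
      simp only [Nat.succ_sub_one]
      field_simp
  -- first derivative
  have hDf : ∀ x ∈ U, HasDerivAt f (G1 x) x := by
    intro x hx
    rw [hfe, hG1def]
    refine hasDerivAt_tsum_of_isPreconnected ((hkey 1).div_const r) isOpen_Ioo
      ((convex_Ioo _ _).isPreconnected) (fun l y _ => (hasDerivAt_pow l y).const_mul (p l))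
      (fun l y hy => ?_) hs1U (S0 h1.le (h12.trans hs2r).le) hx
    rw [Real.norm_eq_abs, abs_of_nonneg (mul_nonneg (hp l)
      (mul_nonneg (Nat.cast_nonneg l) (pow_nonneg hy.1.le _)))]
    match l with
    | 0 => simp
    | Nat.succ n =>
      have he : ((n + 1 : ℕ) : ℝ) ^ 1 * (p (n + 1) * r ^ (n + 1)) / r
          = (((n : ℝ) + 1) * p (n + 1)) * r ^ n := by
        rw [pow_succ]
        push_cast
        field_simp
        ring
      rw [he]
      have hyr : y ^ n ≤ r ^ n := pow_le_pow_left₀ hy.1.le hy.2.le n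
      calc p (n + 1) * (((n + 1 : ℕ) : ℝ) * y ^ (n + 1 - 1))
          = (((n : ℝ) + 1) * p (n + 1)) * y ^ n := by push_cast; ring
        _ ≤ (((n : ℝ) + 1) * p (n + 1)) * r ^ n := by
            refine mul_le_mul_of_nonneg_left hyr (mul_nonneg ?_ (hp _))
            positivity
  -- second derivative
  have hDG1 : ∀ x ∈ U, HasDerivAt G1 (G2 x) x := by
    intro x hx
    rw [hG1def, hG2def]
    have hterm : ∀ (l : ℕ) (y : ℝ),
        HasDerivAt (fun z : ℝ => p l * ((l : ℝ) * z ^ (l - 1)))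
          (p l * (l : ℝ) * ((l - 1 : ℕ) : ℝ) * y ^ (l - 1 - 1)) y := by
      intro l y
      have h := (hasDerivAt_pow (l - 1) y).const_mul (p l * (l : ℝ))
      have hfun : (fun z : ℝ => p l * ((l : ℝ) * z ^ (l - 1)))
          = fun z : ℝ => (p l * (l : ℝ)) * z ^ (l - 1) := by
        funext z; ring
      have hval : p l * (l : ℝ) * ((l - 1 : ℕ) : ℝ) * y ^ (l - 1 - 1)
          = (p l * (l : ℝ)) * (((l - 1 : ℕ) : ℝ) * y ^ (l - 1 - 1)) := by ring
      rw [hfun, hval]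
      exact h
    refine hasDerivAt_tsum_of_isPreconnected
      (g := fun (l : ℕ) (z : ℝ) => p l * ((l : ℝ) * z ^ (l - 1)))
      (g' := fun (l : ℕ) (y : ℝ) => p l * (l : ℝ) * ((l - 1 : ℕ) : ℝ) * y ^ (l - 1 - 1))
      ((hkey 2).div_const (r ^ 2)) isOpen_Ioo
      ((convex_Ioo _ _).isPreconnected) (fun l y _ => hterm l y) (fun l y hy => ?_) hs1U hg0a hx
    rw [Real.norm_eq_abs, abs_of_nonneg (mul_nonneg (mul_nonneg (mul_nonneg (hp l)
        (Nat.cast_nonneg l)) (Nat.cast_nonneg _)) (pow_nonneg hy.1.le _))]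
    match l with
    | 0 => simp
    | 1 =>
      have h1 : (0:ℝ) ≤ ((1:ℕ) : ℝ) ^ 2 * (p 1 * r ^ 1) / r ^ 2 :=
        div_nonneg (mul_nonneg (by norm_num) (mul_nonneg (hp 1) (by positivity)))
          (by positivity)
      simpa using h1
    | Nat.succ (Nat.succ n) =>
      have he : ((n + 2 : ℕ) : ℝ) ^ 2 * (p (n + 2) * r ^ (n + 2)) / r ^ 2
          = (((n : ℝ) + 2) * (((n : ℝ) + 2) * p (n + 2))) * r ^ n := by
        rw [pow_succ, pow_succ]
        push_cast
        field_simp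
        ring
      rw [he]
      have hyr : y ^ n ≤ r ^ n := pow_le_pow_left₀ hy.1.le hy.2.le n
      calc p (n + 2) * ((n + 2 : ℕ) : ℝ) * ((n + 2 - 1 : ℕ) : ℝ) * y ^ (n + 2 - 1 - 1)
          = (((n : ℝ) + 1) * (((n : ℝ) + 2) * p (n + 2))) * y ^ n := by push_cast; ring
        _ ≤ (((n : ℝ) + 2) * (((n : ℝ) + 2) * p (n + 2))) * y ^ n := by
            refine mul_le_mul_of_nonneg_right (mul_le_mul_of_nonneg_right ?_ ?_)
              (pow_nonneg hy.1.le n)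
            · linarith
            · exact mul_nonneg (by positivity) (hp _)
        _ ≤ (((n : ℝ) + 2) * (((n : ℝ) + 2) * p (n + 2))) * r ^ n := by
            refine mul_le_mul_of_nonneg_left hyr (mul_nonneg ?_ (mul_nonneg ?_ (hp _)))
            · positivity
            · positivity
  -- value identities on U
  have hbx : ∀ x ∈ U, x * G1 x = ∑' l : ℕ, (l : ℝ) * (p l * x ^ l) := by
    intro x hx
    rw [hG1def, ← tsum_mul_left]
    refine tsum_congr fun l => ?_
    match l with
    | 0 => simp
    | Nat.succ n =>
      rw [pow_succ]
      push_cast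
      ring
  have hcx : ∀ x ∈ U, x * G1 x + x ^ 2 * G2 x = ∑' l : ℕ, (l : ℝ) ^ 2 * (p l * x ^ l) := by
    intro x hx
    have h2' : x ^ 2 * G2 x
        = ∑' l : ℕ, ((l : ℝ) ^ 2 * (p l * x ^ l) - (l : ℝ) * (p l * x ^ l)) := by
      rw [hG2def, ← tsum_mul_left]
      refine tsum_congr fun l => ?_
      match l with
      | 0 => simp
      | 1 => simp
      | Nat.succ (Nat.succ n) =>
        show x ^ 2 * (p (n + 2) * ((n + 2 : ℕ) : ℝ) * ((n + 1 : ℕ) : ℝ) * x ^ n)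
          = ((n + 2 : ℕ) : ℝ) ^ 2 * (p (n + 2) * x ^ (n + 2))
            - ((n + 2 : ℕ) : ℝ) * (p (n + 2) * x ^ (n + 2))
        push_cast
        ring
    rw [hbx x hx, h2']
    have hS1 : Summable fun l : ℕ => (l : ℝ) * (p l * x ^ l) := S1 hx.1.le hx.2.le
    have hS2 : Summable fun l : ℕ => (l : ℝ) ^ 2 * (p l * x ^ l) := Sx 2 hx.1.le hx.2.le
    rw [← Summable.tsum_add hS1 (hS2.sub hS1)]
    refine tsum_congr fun l => ?_
    ring
  -- positivity on U
  have hbpos : ∀ x ∈ U, 0 < x * G1 x := by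
    intro x hx
    rw [hbx x hx]
    have hS1 : Summable fun l : ℕ => (l : ℝ) * (p l * x ^ l) := S1 hx.1.le hx.2.le
    have hterm : (k : ℝ) * (p k * x ^ k) ≤ ∑' l : ℕ, (l : ℝ) * (p l * x ^ l) :=
      Summable.le_tsum hS1 k (fun m _ => mul_nonneg (Nat.cast_nonneg m)
        (mul_nonneg (hp m) (pow_nonneg hx.1.le m)))
    have hkpos : (0:ℝ) < (k : ℝ) * (p k * x ^ k) := by
      have hk0 : (0:ℝ) < (k:ℝ) := by exact_mod_cast (by omega : 0 < k)
      have := hx.1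
      positivity
    linarith
  -- the quotient function
  set g : ℝ → ℝ := fun x => f x / (x * G1 x) with hgdef
  have hDg : ∀ x ∈ U, HasDerivAt g
      ((G1 x * (x * G1 x) - f x * (1 * G1 x + x * G2 x)) / (x * G1 x) ^ 2) x := by
    intro x hx
    exact (hDf x hx).div ((hasDerivAt_id x).mul (hDG1 x hx)) (ne_of_gt (hbpos x hx))
  have hderiv_neg : ∀ x ∈ U, deriv g x < 0 := by
    intro x hx
    rw [(hDg x hx).deriv]
    have hden : 0 < (x * G1 x) ^ 2 := pow_pos (hbpos x hx) 2
    refine div_neg_of_neg_of_pos ?_ hden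
    have hcs := aux_cs p hp h0 k (by omega) hpk hx.1 (S0 hx.1.le hx.2.le)
      (S1 hx.1.le hx.2.le) (Sx 2 hx.1.le hx.2.le)
    have e1 : x * (G1 x * (x * G1 x) - f x * (1 * G1 x + x * G2 x))
        = (x * G1 x) ^ 2 - f x * (x * G1 x + x ^ 2 * G2 x) := by ring
    have e2 : f x = ∑' l : ℕ, p l * x ^ l := hf x
    have hxN : x * (G1 x * (x * G1 x) - f x * (1 * G1 x + x * G2 x)) < 0 := by
      rw [e1, hcx x hx, hbx x hx, e2]
      nlinarith [hcs]
    nlinarith [hxN, hx.1]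
  have hanti : StrictAntiOn g U := by
    refine strictAntiOn_of_deriv_neg (convex_Ioo _ _) ?_ ?_
    · exact fun x hx => ((hDg x hx).differentiableAt.continuousAt).continuousWithinAt
    · intro x hx
      rw [interior_Ioo] at hx
      exact hderiv_neg x hx
  rw [show deriv f s₁ = G1 s₁ from (hDf s₁ hs1U).deriv,
    show deriv f s₂ = G1 s₂ from (hDf s₂ hs2U).deriv]
  simpa only [hgdef] using hanti hs1U hs2U h12
end
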